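/- For any nontrivial additive character θ of F_q, Σ_{t₁,t₂,t₃ ∈ F_q×} θ(t₁ + t₂ + t₃ - t₁²t₂⁻²t₃ - t₁²t₂⁻³t₃² - t₁t₂⁻²t₃²) = 2q² - 3q - 1. -/

import Mathlib

open Finset

-- Sum of θ(c * t) over units
lemma unit_sum {F : Type} [Field F] [Fintype F] [DecidableEq F]
    (θ : AddChar F ℂ) (hθ : θ ≠ 1) (c : F) :
    ∑ t : Fˣ, θ (c * (t : F)) = (if c = 0 then (Fintype.card F : ℂ) else 0) - 1 := by
  have hprim : θ.IsPrimitive := AddChar.IsPrimitive.of_ne_one hθ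
  have h0 : ∑ x : F, θ (x * c) = if c = 0 then (Fintype.card F : ℂ) else 0 := by
    simpa using AddChar.sum_mulShift c hprim
  have h1 : ∑ t : Fˣ, θ (c * (t : F)) = ∑ x ∈ Finset.univ.erase (0 : F), θ (c * x) := by
    apply Finset.sum_bij (fun (t : Fˣ) _ => (t : F))
    · intro t _; simp [Units.ne_zero]
    · intro a _ b _ h; exact Units.ext h
    · intro x hx
      exact ⟨Units.mk0 x (Finset.ne_of_mem_erase hx), Finset.mem_univ _, rfl⟩
    · intro t _; rfl
  have h2 : ∑ x ∈ Finset.univ.erase (0 : F), θ (c * x) = (∑ x : F, θ (c * x)) - θ (c * 0) := by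
    rw [eq_sub_iff_add_eq, Finset.sum_erase_add _ _ (Finset.mem_univ 0)]
  rw [h1, h2]
  simp_rw [mul_comm c]
  rw [h0]
  simp

theorem stmt13 (F : Type) [Field F] [Fintype F] [DecidableEq F] (q : ℕ) (hq : q = Fintype.card F)
    (θ : AddChar F ℂ) (hθ : θ ≠ 1) :
    ∑ t₁ : Fˣ, ∑ t₂ : Fˣ, ∑ t₃ : Fˣ,
        θ ((t₁ : F) + (t₂ : F) + (t₃ : F)
          - (t₁ : F) ^ 2 * ((t₂ : F)⁻¹) ^ 2 * (t₃ : F)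
          - (t₁ : F) ^ 2 * ((t₂ : F)⁻¹) ^ 3 * (t₃ : F) ^ 2
          - (t₁ : F) * ((t₂ : F)⁻¹) ^ 2 * (t₃ : F) ^ 2)
      = 2 * (q : ℂ) ^ 2 - 3 * q - 1 := by
  classical
  -- the reindexing equivalence (s, v, t) ↦ (s v² t, v t, t)
  set e : Fˣ × Fˣ × Fˣ ≃ Fˣ × Fˣ × Fˣ :=
  { toFun := fun p => (p.1 * p.2.1 ^ 2 * p.2.2, p.2.1 * p.2.2, p.2.2)
    invFun := fun p => (p.1 * p.2.2 * (p.2.1 ^ 2)⁻¹, p.2.1 * p.2.2⁻¹, p.2.2)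
    left_inv := by
      rintro ⟨s, v, t⟩
      refine Prod.ext (Units.ext ?_) (Prod.ext (Units.ext ?_) rfl) <;>
        · push_cast
          field_simp
          try ring
    right_inv := by
      rintro ⟨a, b, c⟩
      refine Prod.ext (Units.ext ?_) (Prod.ext (Units.ext ?_) rfl) <;>
        · push_cast
          field_simp
          try ring } with he
  have key : (∑ t₁ : Fˣ, ∑ t₂ : Fˣ, ∑ t₃ : Fˣ,
        θ ((t₁ : F) + (t₂ : F) + (t₃ : F)
          - (t₁ : F) ^ 2 * ((t₂ : F)⁻¹) ^ 2 * (t₃ : F)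
          - (t₁ : F) ^ 2 * ((t₂ : F)⁻¹) ^ 3 * (t₃ : F) ^ 2
          - (t₁ : F) * ((t₂ : F)⁻¹) ^ 2 * (t₃ : F) ^ 2))
      = ∑ s : Fˣ, ∑ v : Fˣ, ∑ t : Fˣ,
          θ ((1 - (s : F)) * ((s : F) * (v : F) + 1) * ((v : F) + 1) * (t : F)) := by
    rw [show (∑ t₁ : Fˣ, ∑ t₂ : Fˣ, ∑ t₃ : Fˣ,
        θ ((t₁ : F) + (t₂ : F) + (t₃ : F)
          - (t₁ : F) ^ 2 * ((t₂ : F)⁻¹) ^ 2 * (t₃ : F)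
          - (t₁ : F) ^ 2 * ((t₂ : F)⁻¹) ^ 3 * (t₃ : F) ^ 2
          - (t₁ : F) * ((t₂ : F)⁻¹) ^ 2 * (t₃ : F) ^ 2))
      = ∑ p : Fˣ × Fˣ × Fˣ,
        θ ((p.1 : F) + (p.2.1 : F) + (p.2.2 : F)
          - (p.1 : F) ^ 2 * ((p.2.1 : F)⁻¹) ^ 2 * (p.2.2 : F)
          - (p.1 : F) ^ 2 * ((p.2.1 : F)⁻¹) ^ 3 * (p.2.2 : F) ^ 2
          - (p.1 : F) * ((p.2.1 : F)⁻¹) ^ 2 * (p.2.2 : F) ^ 2) from by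
        simp only [Fintype.sum_prod_type]]
    rw [show (∑ s : Fˣ, ∑ v : Fˣ, ∑ t : Fˣ,
          θ ((1 - (s : F)) * ((s : F) * (v : F) + 1) * ((v : F) + 1) * (t : F)))
      = ∑ p : Fˣ × Fˣ × Fˣ,
          θ ((1 - (p.1 : F)) * ((p.1 : F) * (p.2.1 : F) + 1) * ((p.2.1 : F) + 1) * (p.2.2 : F))
        from by simp only [Fintype.sum_prod_type]]
    refine (Fintype.sum_equiv e _ _ ?_).symm
    rintro ⟨s, v, t⟩
    simp only [he, Equiv.coe_fn_mk, Units.val_mul, Units.val_pow_eq_pow_val]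
    congr 1
    have hv : (v : F) ≠ 0 := Units.ne_zero v
    have ht : (t : F) ≠ 0 := Units.ne_zero t
    field_simp
    ring
  rw [key]
  have hQ : ((Fintype.card F : ℕ) : ℂ) = (q : ℂ) := by rw [hq]
  have hcu : ((Fintype.card Fˣ : ℕ) : ℂ) = (q : ℂ) - 1 := by
    rw [Fintype.card_units, Nat.cast_sub Fintype.card_pos, hq]
    simp
  have step1 : ∀ s : Fˣ, (∑ v : Fˣ, ∑ t : Fˣ,
      θ ((1 - (s : F)) * ((s : F) * (v : F) + 1) * ((v : F) + 1) * (t : F)))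
      = if s = 1 then ((q:ℂ) - 1) * q - ((q:ℂ) - 1) else 2 * q - ((q:ℂ) - 1) := by
    intro s
    have h1 : (∑ v : Fˣ, ∑ t : Fˣ,
        θ ((1 - (s : F)) * ((s : F) * (v : F) + 1) * ((v : F) + 1) * (t : F)))
        = ∑ v : Fˣ, ((if (1 - (s : F)) * ((s : F) * (v : F) + 1) * ((v : F) + 1) = 0
            then (q : ℂ) else 0) - 1) := by
      refine Finset.sum_congr rfl fun v _ => ?_
      rw [unit_sum θ hθ, hQ]
    rw [h1, Finset.sum_sub_distrib, Finset.sum_const, Finset.card_univ, nsmul_eq_mul, mul_one,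
      hcu]
    by_cases hs : s = 1
    · subst hs
      rw [if_pos rfl]
      have : ∀ v : Fˣ, (if (1 - ((1:Fˣ) : F)) * (((1:Fˣ) : F) * (v : F) + 1) * ((v : F) + 1) = 0
          then (q : ℂ) else 0) = (q : ℂ) := by
        intro v; rw [if_pos]; simp
      rw [Finset.sum_congr rfl fun v _ => this v, Finset.sum_const, Finset.card_univ,
        nsmul_eq_mul, hcu]
    · rw [if_neg hs]
      congr 1
      have hs' : ((s : F)) ≠ 1 := by
        intro h; exact hs (Units.ext (by simpa using h))
      have hab : (-s⁻¹ : Fˣ) ≠ (-1 : Fˣ) := by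
        intro h
        apply hs
        rw [neg_inj, inv_eq_one] at h
        exact h
      have key2 : ∀ v : Fˣ, (if (1 - (s : F)) * ((s : F) * (v : F) + 1) * ((v : F) + 1) = 0
          then (q : ℂ) else 0)
          = (if v = -s⁻¹ then (q:ℂ) else 0) + (if v = -1 then (q:ℂ) else 0) := by
        intro v
        have hcond : ((1 - (s : F)) * ((s : F) * (v : F) + 1) * ((v : F) + 1) = 0)
            ↔ (v = -s⁻¹ ∨ v = -1) := by
          rw [mul_eq_zero, mul_eq_zero]
          constructor
          · rintro ((h | h) | h)
            · exact absurd (by linear_combination -h) hs'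
            · left
              have : (s : F) * (v : F) = -1 := by linear_combination h
              have : ((s * v : Fˣ) : F) = ((-1 : Fˣ) : F) := by push_cast; simpa using this
              have hsv : s * v = -1 := Units.ext this
              calc v = s⁻¹ * (s * v) := by rw [inv_mul_cancel_left]
                _ = s⁻¹ * (-1) := by rw [hsv]
                _ = -s⁻¹ := by rw [mul_neg_one]
            · right
              apply Units.ext
              push_cast
              linear_combination h
          · rintro (h | h)
            · left; right
              subst h
              push_cast
              field_simp
              ring
            · right
              subst h
              push_cast
              ring
        by_cases h1 : v = -s⁻¹
        · rw [if_pos (hcond.mpr (Or.inl h1)), if_pos h1, if_neg (by rw [h1]; exact hab),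
            add_zero]
        · by_cases h2 : v = -1
          · rw [if_pos (hcond.mpr (Or.inr h2)), if_neg h1, if_pos h2, zero_add]
          · rw [if_neg (by rw [hcond]; tauto), if_neg h1, if_neg h2, add_zero]
      rw [Finset.sum_congr rfl fun v _ => key2 v, Finset.sum_add_distrib,
        Finset.sum_ite_eq' Finset.univ (-s⁻¹) (fun _ => (q:ℂ)),
        Finset.sum_ite_eq' Finset.univ (-1 : Fˣ) (fun _ => (q:ℂ))]
      simp
      ring
  rw [Finset.sum_congr rfl fun s _ => step1 s]
  have split : ∀ s : Fˣ, (if s = 1 then ((q:ℂ) - 1) * q - ((q:ℂ) - 1) else 2 * q - ((q:ℂ) - 1))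
      = (2 * (q:ℂ) - ((q:ℂ) - 1)) + (if s = 1 then (((q:ℂ) - 1) * q - ((q:ℂ) - 1)) - (2 * (q:ℂ) - ((q:ℂ) - 1)) else 0) := by
    intro s
    by_cases hs : s = 1 <;> simp [hs]
  rw [Finset.sum_congr rfl fun s _ => split s, Finset.sum_add_distrib, Finset.sum_const,
    Finset.card_univ, nsmul_eq_mul, hcu,
    Finset.sum_ite_eq' Finset.univ (1 : Fˣ) (fun _ => (((q:ℂ) - 1) * q - ((q:ℂ) - 1)) - (2 * (q:ℂ) - ((q:ℂ) - 1)))]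
  simp
  ring
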